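/- Non-archimedean Hahn–Banach extension theorem (Ingleton): Let K be a field equipped with an absolute value |·| : K → ℝ that is multiplicative (|ab| = |a||b|), positive definite (|a| = 0 iff a = 0), and satisfies the ultrametric inequality |a + b| ≤ max(|a|, |b|); assume K is spherically complete: every nonempty family of closed balls {z ∈ K : |z − a_j| ≤ r_j} with the finite intersection property has nonempty intersection. Let V be a K-vector space with an ultra-norm ‖·‖ : V → ℝ (‖x‖ = 0 iff x = 0, ‖c·x‖ = |c|·‖x‖, and ‖x + y‖ ≤ max(‖x‖, ‖y‖)), let W ⊆ V be a K-linear subspace, let T : W → K be K-linear, and let C ≥ 0 satisfy |T(x)| ≤ C·‖x‖ for all x ∈ W. Then there exists a K-linear map M : V → K such that M(x) = T(x) for all x ∈ W and |M(x)| ≤ C·‖x‖ for all x ∈ V. -/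

import Mathlib

/-- Ingleton's non-archimedean Hahn–Banach theorem: let `K` be a field with
a non-archimedean absolute value `av` which is spherically complete, let `V` be a
`K`-vector space with an ultra-norm `N`, `W ⊆ V` a subspace, `T : W → K` linear and
`C ≥ 0` with `av (T x) ≤ C * N x` on `W`. Then `T` extends to a linear `M : V → K` with
`av (M x) ≤ C * N x` on all of `V`. -/
theorem ingleton_hahn_banach
    (K : Type*) [Field K] (av : K → ℝ)
    (hav_nonneg : ∀ a, 0 ≤ av a)
    (hav_zero : ∀ a, av a = 0 ↔ a = 0)
    (hav_mul : ∀ a b, av (a * b) = av a * av b)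
    (hav_ultra : ∀ a b, av (a + b) ≤ max (av a) (av b))
    -- spherical completeness: every nonempty family of closed balls with the
    -- (pairwise) finite intersection property has nonempty intersection
    (hsc : ∀ B : Set (K × ℝ), B.Nonempty →
      (∀ p ∈ B, ∀ q ∈ B, ∃ z : K, av (z - p.1) ≤ p.2 ∧ av (z - q.1) ≤ q.2) →
      ∃ z : K, ∀ p ∈ B, av (z - p.1) ≤ p.2)
    (V : Type*) [AddCommGroup V] [Module K V] (N : V → ℝ)
    (hN_nonneg : ∀ x, 0 ≤ N x)
    (hN_zero : ∀ x, N x = 0 ↔ x = 0)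
    (hN_smul : ∀ (c : K) (x : V), N (c • x) = av c * N x)
    (hN_ultra : ∀ x y, N (x + y) ≤ max (N x) (N y))
    (W : Submodule K V) (T : W →ₗ[K] K)
    (C : ℝ) (hC : 0 ≤ C) (hT : ∀ x : W, av (T x) ≤ C * N (x : V)) :
    ∃ M : V →ₗ[K] K, (∀ x : W, M (x : V) = T x) ∧ ∀ x : V, av (M x) ≤ C * N x := by
  -- basic facts about av and N
  have hav1 : av 1 = 1 := by
    have h := hav_mul 1 1
    rw [one_mul] at h
    have h1 : av (1 : K) ≠ 0 := fun h0 => one_ne_zero ((hav_zero 1).1 h0)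
    rcases mul_eq_zero.1 (by nlinarith : av (1:K) * (av (1:K) - 1) = 0) with h0 | h0
    · exact absurd h0 h1
    · linarith
  have havneg : ∀ a : K, av (-a) = av a := by
    intro a
    have h := hav_mul (-1) (-1)
    rw [neg_mul_neg, one_mul, hav1] at h
    have h2 : av (-1 : K) = 1 := by nlinarith [hav_nonneg (-1 : K)]
    calc av (-a) = av ((-1) * a) := by rw [neg_one_mul]
    _ = av a := by rw [hav_mul, h2, one_mul]
  have havsub : ∀ a b : K, av (a - b) ≤ max (av a) (av b) := by
    intro a b
    have := hav_ultra a (-b)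
    rwa [← sub_eq_add_neg, havneg] at this
  have hNneg : ∀ x : V, N (-x) = N x := by
    intro x
    have h := hN_smul (-1) x
    have h2 : av (-1 : K) = 1 := by
      have := havneg (1 : K); rwa [hav1] at this
    rw [neg_one_smul] at h
    rw [h, h2, one_mul]
  have hNsub : ∀ x y : V, N (x - y) ≤ max (N x) (N y) := by
    intro x y
    have := hN_ultra x (-y)
    rwa [← sub_eq_add_neg, hNneg] at this
  -- the set of bounded extensions
  set S : Set (V →ₗ.[K] K) := { f | ∀ x : f.domain, av (f x) ≤ C * N x } with hS
  have hSc : ∀ c ⊆ S, IsChain (· ≤ ·) c → ∀ y ∈ c, ∃ ub ∈ S, ∀ z ∈ c, z ≤ ub := by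
    intro c hcs c_chain y hy
    have cne : c.Nonempty := ⟨y, hy⟩
    have hcd : DirectedOn (· ≤ ·) c := c_chain.directedOn
    refine ⟨LinearPMap.sSup c hcd, ?_, fun _ => LinearPMap.le_sSup hcd⟩
    rintro ⟨x, hx⟩
    have hdir : DirectedOn (· ≤ ·) (LinearPMap.domain '' c) :=
      directedOn_image.2 (hcd.mono @(LinearPMap.domain_mono.monotone))
    rcases (Submodule.mem_sSup_of_directed (cne.image _) hdir).1 hx with ⟨_, ⟨f, hfc, rfl⟩, hfx⟩
    have hle : f ≤ LinearPMap.sSup c hcd := LinearPMap.le_sSup _ hfc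
    have := hcs hfc ⟨x, hfx⟩
    convert this using 2
    exact (hle.2 rfl).symm
  have hp : (⟨W, T⟩ : V →ₗ.[K] K) ∈ S := hT
  obtain ⟨q, hpq, hqmax⟩ := zorn_le_nonempty₀ S hSc _ hp
  have hqS : q ∈ S := hqmax.prop
  -- maximal element has full domain
  have hqtop : q.domain = ⊤ := by
    by_contra htop
    obtain ⟨v, -, hv⟩ := SetLike.exists_of_lt (lt_top_iff_ne_top.2 htop : q.domain < ⊤)
    -- balls
    set B : Set (K × ℝ) := Set.range (fun w : q.domain => (q w, C * N ((w : V) - v))) with hB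
    have hBne : B.Nonempty := ⟨_, ⟨0, rfl⟩⟩
    have hkey : ∀ w₁ w₂ : q.domain,
        av (q w₁ - q w₂) ≤ max (C * N ((w₁ : V) - v)) (C * N ((w₂ : V) - v)) := by
      intro w₁ w₂
      have h1 : av (q w₁ - q w₂) = av (q (w₁ - w₂)) := by rw [LinearPMap.map_sub]
      rw [h1]
      have h2 := hqS (w₁ - w₂)
      have h3 : ((w₁ - w₂ : q.domain) : V) = ((w₁ : V) - v) - ((w₂ : V) - v) := by
        push_cast; abel
      rw [h3] at h2
      calc av (q (w₁ - w₂)) ≤ C * N (((w₁ : V) - v) - ((w₂ : V) - v)) := h2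
        _ ≤ C * max (N ((w₁ : V) - v)) (N ((w₂ : V) - v)) :=
            mul_le_mul_of_nonneg_left (hNsub _ _) hC
        _ = max (C * N ((w₁ : V) - v)) (C * N ((w₂ : V) - v)) := by
            rw [mul_max_of_nonneg _ _ hC]
    have hBfip : ∀ p ∈ B, ∀ r ∈ B, ∃ z : K, av (z - p.1) ≤ p.2 ∧ av (z - r.1) ≤ r.2 := by
      rintro _ ⟨w₁, rfl⟩ _ ⟨w₂, rfl⟩
      have hz0 : av (0 : K) = 0 := (hav_zero 0).2 rfl
      rcases le_total (C * N ((w₁ : V) - v)) (C * N ((w₂ : V) - v)) with h | h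
      · exact ⟨q w₁, by rw [sub_self, hz0]; exact mul_nonneg hC (hN_nonneg _),
          (hkey w₁ w₂).trans (max_le h le_rfl)⟩
      · exact ⟨q w₂, (hkey w₂ w₁).trans (max_le h le_rfl),
          by rw [sub_self, hz0]; exact mul_nonneg hC (hN_nonneg _)⟩
    obtain ⟨z, hz⟩ := hsc B hBne hBfip
    have hzw : ∀ w : q.domain, av (z - q w) ≤ C * N ((w : V) - v) := fun w =>
      hz _ ⟨w, rfl⟩
    -- extend q by v ↦ z
    set r : V →ₗ.[K] K := q.supSpanSingleton v z hv with hr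
    have hrS : r ∈ S := by
      rintro ⟨x, hx⟩
      rw [hr, LinearPMap.domain_supSpanSingleton] at hx
      rcases Submodule.mem_sup.1 hx with ⟨w, hw, y, hy, rfl⟩
      rcases Submodule.mem_span_singleton.1 hy with ⟨a, rfl⟩
      have happ : r ⟨w + a • v, hx⟩ = q ⟨w, hw⟩ + a • z :=
        LinearPMap.supSpanSingleton_apply_mk q v z hv w hw a
      rw [happ]
      rcases eq_or_ne a 0 with rfl | ha
      · simpa using hqS ⟨w, hw⟩
      · have hq' := hzw ((-a⁻¹) • (⟨w, hw⟩ : q.domain))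
        have hcoe : ((((-a⁻¹) • (⟨w, hw⟩ : q.domain)) : q.domain) : V) = (-a⁻¹) • w := rfl
        rw [hcoe] at hq'
        have heq : q ⟨w, hw⟩ + a • z = a * (z - q ((-a⁻¹) • ⟨w, hw⟩)) := by
          rw [LinearPMap.map_smul]
          field_simp
          rw [smul_eq_mul, smul_eq_mul, neg_mul, mul_sub, mul_neg, ← mul_assoc, mul_one_div_cancel ha, one_mul]
          ring
        have h4 : a • ((-a⁻¹ : K) • w - v) = -(w + a • v) := by
          rw [smul_sub, smul_smul, mul_neg, mul_inv_cancel₀ ha, neg_smul, one_smul]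
          abel
        have hsm := hN_smul a ((-a⁻¹ : K) • w - v)
        rw [h4, hNneg] at hsm
        rw [heq, hav_mul]
        calc av a * av (z - q ((-a⁻¹) • ⟨w, hw⟩))
            ≤ av a * (C * N ((-a⁻¹ : K) • w - v)) :=
              mul_le_mul_of_nonneg_left hq' (hav_nonneg a)
          _ = C * (av a * N ((-a⁻¹ : K) • w - v)) := by ring
          _ = C * N (w + a • v) := by rw [← hsm]
    have hqr : q < r := by
      have hle : q ≤ r := q.left_le_sup _ _
      refine lt_of_le_of_ne hle (fun h => hv ?_)
      rw [h, hr, LinearPMap.domain_supSpanSingleton]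
      exact Submodule.mem_sup_right (Submodule.mem_span_singleton_self v)
    exact hqr.not_ge (hqmax.2 hrS hqr.le)
  -- convert to a total linear map
  obtain ⟨qd, qf⟩ := q
  obtain rfl : qd = ⊤ := hqtop
  refine ⟨qf.comp (LinearMap.id.codRestrict ⊤ fun _ => trivial), ?_, ?_⟩
  · intro x
    exact (hpq.2 (x := x) (y := ⟨(x : V), trivial⟩) rfl).symm
  · intro x
    exact hqS ⟨x, trivial⟩
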